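/- Let A ∈ ℝ^{m×m} be positive definite, meaning xᵀAx > 0 for every nonzero x ∈ ℝ^m (A need not be symmetric), let B ∈ ℝ^{m×n} have full column rank (rank B = n), and let α ≥ 0, β > 0. Then every eigenvalue λ ∈ ℂ of the MGSSP preconditioned matrix (i.e., every λ for which there is a nonzero w ∈ ℂ^{m+n} with 𝒜w = λ P(α,β)w) has positive real part, Re(λ) > 0, and lies in the closed disk of radius 1/2 centered at 1/2: |λ − 1/2| ≤ 1/2. -/

import Mathlib

open Matrix

/-- The MGSSP splitting matrix `P(α,β) = [[αI+2A, 2B], [−2Bᵀ, βI]]`. -/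
noncomputable def Pmat {m n : ℕ} (A : Matrix (Fin m) (Fin m) ℝ) (B : Matrix (Fin m) (Fin n) ℝ)
    (α β : ℝ) : Matrix (Fin m ⊕ Fin n) (Fin m ⊕ Fin n) ℝ :=
  fromBlocks (α • 1 + (2 : ℝ) • A) ((2 : ℝ) • B) (-((2 : ℝ) • Bᵀ)) (β • 1)

/-- The MGSSP splitting matrix `Q(α,β) = [[αI+A, B], [−Bᵀ, βI]]`. -/
noncomputable def Qmat {m n : ℕ} (A : Matrix (Fin m) (Fin m) ℝ) (B : Matrix (Fin m) (Fin n) ℝ)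
    (α β : ℝ) : Matrix (Fin m ⊕ Fin n) (Fin m ⊕ Fin n) ℝ :=
  fromBlocks (α • 1 + A) B (-Bᵀ) (β • 1)

/-- The saddle point matrix `𝒜 = [[A, B], [−Bᵀ, 0]]`. -/
noncomputable def Amat {m n : ℕ} (A : Matrix (Fin m) (Fin m) ℝ) (B : Matrix (Fin m) (Fin n) ℝ) :
    Matrix (Fin m ⊕ Fin n) (Fin m ⊕ Fin n) ℝ :=
  fromBlocks A B (-Bᵀ) 0

/- ### Auxiliary lemmas -/

noncomputable def Dmat {m n : ℕ} (α β : ℝ) : Matrix (Fin m ⊕ Fin n) (Fin m ⊕ Fin n) ℝ :=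
  fromBlocks (α • 1) 0 0 (β • 1)

lemma map_smul_one' {k : ℕ} (c : ℝ) :
    ((c • (1 : Matrix (Fin k) (Fin k) ℝ)).map Complex.ofReal) = (c : ℂ) • 1 := by
  ext i j
  simp [Matrix.one_apply, apply_ite Complex.ofReal]

lemma map_smul' {k l : ℕ} (c : ℝ) (M : Matrix (Fin k) (Fin l) ℝ) :
    ((c • M).map Complex.ofReal) = (c : ℂ) • M.map Complex.ofReal := by
  ext i j; simp

lemma map_neg' {k l : ℕ} (M : Matrix (Fin k) (Fin l) ℝ) :
    ((-M).map Complex.ofReal) = -(M.map Complex.ofReal) := by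
  ext i j; simp

lemma map_transpose' {k l : ℕ} (M : Matrix (Fin k) (Fin l) ℝ) :
    (Mᵀ.map Complex.ofReal) = (M.map Complex.ofReal)ᵀ := by
  ext i j; simp

lemma map_add' {k l : ℕ} (M N : Matrix (Fin k) (Fin l) ℝ) :
    ((M + N).map Complex.ofReal) = M.map Complex.ofReal + N.map Complex.ofReal := by
  ext i j; simp

lemma re_quad {k : Type*} [Fintype k] (M : Matrix k k ℝ) (w : k → ℂ) :
    (star w ⬝ᵥ (M.map (Complex.ofReal) *ᵥ w)).re
      = (fun i => (w i).re) ⬝ᵥ (M *ᵥ fun i => (w i).re)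
        + (fun i => (w i).im) ⬝ᵥ (M *ᵥ fun i => (w i).im) := by
  simp only [dotProduct, mulVec, Matrix.map_apply, Pi.star_apply, Finset.mul_sum,
    Complex.re_sum, ← Finset.sum_add_distrib]
  refine Finset.sum_congr rfl fun i _ => Finset.sum_congr rfl fun j _ => ?_
  simp [Complex.mul_re, Complex.mul_im]

lemma rank_inj {m n : ℕ} (B : Matrix (Fin m) (Fin n) ℝ) (hB : B.rank = n)
    (x : Fin n → ℝ) (hx : B *ᵥ x = 0) : x = 0 := by
  have h := LinearMap.finrank_range_add_finrank_ker B.mulVecLin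
  rw [← Matrix.rank, hB] at h
  simp [Module.finrank_pi] at h
  have hx' : x ∈ LinearMap.ker B.mulVecLin := by simpa [Matrix.mulVecLin] using hx
  rw [h] at hx'
  simpa using hx'

lemma rank_inj_c {m n : ℕ} (B : Matrix (Fin m) (Fin n) ℝ) (hB : B.rank = n)
    (v : Fin n → ℂ) (hv : B.map Complex.ofReal *ᵥ v = 0) : v = 0 := by
  have hre : B *ᵥ (fun j => (v j).re) = 0 := by
    funext i
    have h := congrFun hv i
    simp only [mulVec, dotProduct, Matrix.map_apply, Pi.zero_apply] at h
    have := congrArg Complex.re h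
    simp only [Complex.re_sum, Complex.zero_re] at this
    simp only [mulVec, dotProduct, Pi.zero_apply]
    simpa [Complex.mul_re] using this
  have him : B *ᵥ (fun j => (v j).im) = 0 := by
    funext i
    have h := congrFun hv i
    simp only [mulVec, dotProduct, Matrix.map_apply, Pi.zero_apply] at h
    have := congrArg Complex.im h
    simp only [Complex.im_sum, Complex.zero_im] at this
    simp only [mulVec, dotProduct, Pi.zero_apply]
    simpa [Complex.mul_im] using this
  have h1 := rank_inj B hB _ hre
  have h2 := rank_inj B hB _ him
  funext j
  exact Complex.ext (congrFun h1 j) (congrFun h2 j)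

lemma P_decomp {m n : ℕ} (A : Matrix (Fin m) (Fin m) ℝ) (B : Matrix (Fin m) (Fin n) ℝ)
    (α β : ℝ) : Pmat A B α β = (2:ℝ) • Amat A B + Dmat α β := by
  ext i j
  rcases i with i | i <;> rcases j with j | j <;>
    simp [Pmat, Amat, Dmat, Matrix.fromBlocks] <;> ring

lemma amat_quad {m n : ℕ} (A : Matrix (Fin m) (Fin m) ℝ) (B : Matrix (Fin m) (Fin n) ℝ)
    (x : Fin m ⊕ Fin n → ℝ) :
    x ⬝ᵥ (Amat A B *ᵥ x) = (x ∘ Sum.inl) ⬝ᵥ (A *ᵥ (x ∘ Sum.inl)) := by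
  have hx : x = Sum.elim (x ∘ Sum.inl) (x ∘ Sum.inr) := (Sum.elim_comp_inl_inr x).symm
  rw [Amat, fromBlocks_mulVec]
  nth_rewrite 1 [hx]
  rw [sumElim_dotProduct_sumElim]
  rw [dotProduct_add, dotProduct_add, Matrix.neg_mulVec, dotProduct_neg,
    dotProduct_mulVec _ Bᵀ, vecMul_transpose, dotProduct_comm _ (x ∘ Sum.inl)]
  simp

lemma dmat_mulVec {m n : ℕ} (α β : ℝ) (w : Fin m ⊕ Fin n → ℂ) :
    (Dmat α β (m := m) (n := n)).map Complex.ofReal *ᵥ w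
      = fun k => (Sum.elim (fun _ : Fin m => (α:ℂ)) (fun _ : Fin n => (β:ℂ)) k) * w k := by
  funext k
  rcases k with i | j <;>
    simp [Dmat, Matrix.fromBlocks_map, Matrix.fromBlocks_mulVec, map_smul_one',
      Matrix.smul_mulVec, Matrix.one_mulVec, Function.comp]

lemma pos_quad_of_ne {m : ℕ} (A : Matrix (Fin m) (Fin m) ℝ)
    (hA : ∀ x : Fin m → ℝ, x ≠ 0 → 0 < x ⬝ᵥ (A *ᵥ x)) (u : Fin m → ℂ) (hu : u ≠ 0) :
    0 < (fun i => (u i).re) ⬝ᵥ (A *ᵥ fun i => (u i).re)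
        + (fun i => (u i).im) ⬝ᵥ (A *ᵥ fun i => (u i).im) := by
  have hnnA : ∀ z : Fin m → ℝ, 0 ≤ z ⬝ᵥ (A *ᵥ z) := by
    intro z
    by_cases hz : z = 0
    · simp [hz]
    · exact (hA z hz).le
  by_cases h1 : (fun i => (u i).re) = 0
  · have h2 : (fun i => (u i).im) ≠ 0 := by
      intro h2
      exact hu (funext fun i => Complex.ext (congrFun h1 i) (congrFun h2 i))
    have := hA _ h2
    have := hnnA (fun i => (u i).re)
    linarith
  · have := hA _ h1
    have := hnnA (fun i => (u i).im)
    linarith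

/-- Remark 5.1: every eigenvalue of the MGSSP preconditioned matrix has positive real
part and lies in the closed disk of radius `1/2` centered at `1/2`. -/
theorem mgssp_precond_eigenvalues_in_disk {m n : ℕ}
    (A : Matrix (Fin m) (Fin m) ℝ) (B : Matrix (Fin m) (Fin n) ℝ)
    (hA : ∀ x : Fin m → ℝ, x ≠ 0 → 0 < x ⬝ᵥ (A *ᵥ x))
    (hB : B.rank = n)
    (α β : ℝ) (hα : 0 ≤ α) (hβ : 0 < β)
    (lam : ℂ) (w : Fin m ⊕ Fin n → ℂ) (hw : w ≠ 0)
    (heig : (Amat A B).map Complex.ofReal *ᵥ w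
        = lam • ((Pmat A B α β).map Complex.ofReal *ᵥ w)) :
    0 < lam.re ∧ ‖lam - 1 / 2‖ ≤ 1 / 2 := by
  classical
  set 𝒜c := (Amat A B).map Complex.ofReal with h𝒜c
  have hAc : 𝒜c = fromBlocks (A.map Complex.ofReal) (B.map Complex.ofReal)
      (-(B.map Complex.ofReal)ᵀ) 0 := by
    rw [h𝒜c, Amat, fromBlocks_map, map_neg', map_transpose',
      Matrix.map_zero _ Complex.ofReal_zero]
  set s : ℂ := star w ⬝ᵥ (𝒜c *ᵥ w) with hs
  set dr : ℝ := ∑ k, (Sum.elim (fun _ : Fin m => α) (fun _ : Fin n => β) k)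
      * Complex.normSq (w k) with hdr_def
  have hdr : 0 ≤ dr := by
    refine Finset.sum_nonneg fun k _ => ?_
    rcases k with i | j
    · exact mul_nonneg hα (Complex.normSq_nonneg _)
    · exact mul_nonneg hβ.le (Complex.normSq_nonneg _)
  have hd : star w ⬝ᵥ ((Dmat α β (m := m) (n := n)).map Complex.ofReal *ᵥ w) = (dr : ℂ) := by
    rw [dmat_mulVec, hdr_def]
    push_cast
    simp only [dotProduct, Pi.star_apply]
    refine Finset.sum_congr rfl fun k _ => ?_
    have hcal : ∀ c : ℂ, star (w k) * (c * w k) = c * (Complex.normSq (w k) : ℂ) := by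
      intro c
      calc star (w k) * (c * w k) = c * (w k * star (w k)) := by ring
        _ = c * (Complex.normSq (w k) : ℂ) := by rw [Complex.star_def, Complex.mul_conj]
    rcases k with i | j <;> simpa using hcal _
  have hPmap : (Pmat A B α β).map Complex.ofReal
      = (2:ℂ) • (Amat A B).map Complex.ofReal + (Dmat α β).map Complex.ofReal := by
    ext i j
    rcases i with i | i <;> rcases j with j | j <;>
      simp [Pmat, Amat, Dmat, Matrix.fromBlocks, Matrix.one_apply, apply_ite Complex.ofReal] <;>
      ring
  have hPc : (Pmat A B α β).map Complex.ofReal *ᵥ w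
      = (2:ℂ) • (𝒜c *ᵥ w) + (Dmat α β).map Complex.ofReal *ᵥ w := by
    rw [hPmap, add_mulVec, Matrix.smul_mulVec, h𝒜c]
  have heig' : 𝒜c *ᵥ w = lam • ((2:ℂ) • (𝒜c *ᵥ w) + (Dmat α β).map Complex.ofReal *ᵥ w) := by
    rw [← hPc]; exact heig
  have key : s = lam * (2 * s + (dr : ℂ)) := by
    have h0 := congrArg (fun z => star w ⬝ᵥ z) heig'
    simpa [dotProduct_add, dotProduct_smul, hd, ← hs, smul_eq_mul, mul_add, two_mul]
      using h0
  -- the `u` block is nonzero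
  have hu : (fun i => w (Sum.inl i)) ≠ 0 := by
    intro hu0
    have hwl : w ∘ Sum.inl = 0 := funext fun i => congrFun hu0 i
    have h𝒜w : 𝒜c *ᵥ w
        = Sum.elim ((B.map Complex.ofReal) *ᵥ (w ∘ Sum.inr)) 0 := by
      rw [hAc, fromBlocks_mulVec, hwl]
      simp [Matrix.neg_mulVec]
    obtain ⟨j, hj⟩ : ∃ j, w (Sum.inr j) ≠ 0 := by
      by_contra h
      push_neg at h
      apply hw
      funext k
      rcases k with i | j
      · exact congrFun hu0 i
      · exact h j
    have hlam0 : lam = 0 := by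
      have h2 := congrFun heig' (Sum.inr j)
      rw [h𝒜w, dmat_mulVec] at h2
      simp only [Sum.elim_inr, Pi.smul_apply, Pi.add_apply, smul_eq_mul] at h2
      have : 0 = lam * ((β:ℂ) * w (Sum.inr j)) := by simpa using h2
      rcases mul_eq_zero.mp this.symm with h | h
      · exact h
      · exact absurd (mul_eq_zero.mp h)
          (by push_neg; exact ⟨Complex.ofReal_ne_zero.mpr hβ.ne', hj⟩)
    have hBv : (B.map Complex.ofReal) *ᵥ (w ∘ Sum.inr) = 0 := by
      funext i
      have h1 := congrFun heig' (Sum.inl i)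
      rw [h𝒜w] at h1
      simpa [hlam0] using h1
    have := rank_inj_c B hB _ hBv
    exact hj (congrFun this j)
  have hsre : 0 < s.re := by
    have h1 : s.re = ((fun k => (w k).re) ∘ Sum.inl) ⬝ᵥ (A *ᵥ ((fun k => (w k).re) ∘ Sum.inl))
        + ((fun k => (w k).im) ∘ Sum.inl) ⬝ᵥ (A *ᵥ ((fun k => (w k).im) ∘ Sum.inl)) := by
      rw [hs, h𝒜c, re_quad, amat_quad A B, amat_quad A B]
    rw [h1]
    exact pos_quad_of_ne A hA _ hu
  have key2 : s = lam * (2 * s + (dr : ℂ)) := key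
  set q : ℂ := 2 * s + (dr : ℂ) with hq_def
  have hqre : q.re = 2 * s.re + dr := by
    simp [hq_def, Complex.add_re, Complex.mul_re]
  have hqim : q.im = 2 * s.im := by
    simp [hq_def, Complex.add_im, Complex.mul_im]
  have hq0 : q ≠ 0 := by
    intro h
    have := congrArg Complex.re h
    rw [hqre] at this
    simp only [Complex.zero_re] at this
    linarith
  have hlam : lam = s / q := by
    rw [eq_div_iff hq0, ← key2]
  constructor
  · rw [hlam, Complex.div_re]
    have hnq : 0 < Complex.normSq q := Complex.normSq_pos.mpr hq0
    rw [← add_div]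
    apply div_pos _ hnq
    rw [hqre, hqim]
    nlinarith [sq_nonneg s.im]
  · have h2q : (2:ℂ) * q ≠ 0 := mul_ne_zero two_ne_zero hq0
    have hform : lam - 1/2 = -(dr:ℂ) / (2*q) := by
      rw [eq_div_iff h2q, hlam]
      field_simp
      rw [hq_def]
      ring
    rw [hform, norm_div]
    simp only [norm_neg, Complex.norm_real, Real.norm_eq_abs, norm_mul, Complex.norm_two]
    rw [abs_of_nonneg hdr]
    have habs : 0 < ‖q‖ := norm_pos_iff.mpr hq0
    have hqre2 : dr ≤ q.re := by rw [hqre]; linarith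
    have hqa : dr ≤ ‖q‖ := hqre2.trans (Complex.re_le_norm q)
    rw [div_le_div_iff₀ (by positivity) (by norm_num)]
    linarith
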